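/- arXiv:1711.03340 — 3 statements merged into one kernel-verified Lean document; each statement's English description precedes it below -/
import Mathlib

section
/- For all n ≥ 0, the generating polynomial of odd-sum subsets satisfies o_{2n}(x) = ((1+x)^{2n} - (1-x^2)^n)/2 and o_{2n+1}(x) = ((1+x)^{2n+1} - (1-x)(1-x^2)^n)/2. -/
def evenCount (n k : ℕ) : ℕ :=
  ((Finset.Icc 1 n).powerset.filter (fun S => S.card = k ∧ Even (S.sum id))).card

def oddCount (n k : ℕ) : ℕ :=
  ((Finset.Icc 1 n).powerset.filter (fun S => S.card = k ∧ Odd (S.sum id))).card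

noncomputable def oPoly (n : ℕ) : Polynomial ℚ :=
  ∑ k ∈ Finset.range (n + 1), (oddCount n k : ℚ) • Polynomial.X ^ k

open Polynomial Finset

lemma oPoly_eq_sum (n : ℕ) :
    oPoly n = ∑ S ∈ (Icc 1 n).powerset,
      (if Odd (S.sum id) then (X : ℚ[X]) ^ S.card else 0) := by
  rw [oPoly,
    ← Finset.sum_fiberwise_of_maps_to (g := fun S : Finset ℕ => S.card)
      (t := Finset.range (n + 1))
      (fun S hS => by
        simp only [Finset.mem_range, Nat.lt_succ_iff]
        calc S.card ≤ (Icc 1 n).card := Finset.card_le_card (Finset.mem_powerset.mp hS)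
        _ = n := by simp)]
  refine Finset.sum_congr rfl fun k _ => ?_
  rw [Finset.sum_ite, Finset.sum_const_zero, add_zero, Finset.filter_filter]
  rw [Finset.sum_congr rfl (fun S hS => by
    simp only [Finset.mem_filter] at hS
    rw [hS.2.1])]
  rw [Finset.sum_const, nsmul_eq_mul, oddCount]
  ext S
  simp [and_comm]

lemma sum_pow_card (n : ℕ) :
    ∑ S ∈ (Icc 1 n).powerset, (X : ℚ[X]) ^ S.card = (1 + X) ^ n := by
  have h := Finset.prod_add (fun _ : ℕ => (X : ℚ[X])) (fun _ => 1) (Icc 1 n)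
  simp only [Finset.prod_const, Finset.prod_const_one, one_pow, mul_one] at h
  rw [← h, Nat.card_Icc]
  simp [add_comm]

lemma sum_sign (n : ℕ) :
    ∑ S ∈ (Icc 1 n).powerset, C ((-1 : ℚ) ^ (S.sum id)) * (X : ℚ[X]) ^ S.card
      = ∏ i ∈ Icc 1 n, (C ((-1 : ℚ) ^ i) * X + 1) := by
  have h := Finset.prod_add (fun i : ℕ => C ((-1 : ℚ) ^ i) * X) (fun _ => 1) (Icc 1 n)
  simp only [Finset.prod_const_one, mul_one] at h
  rw [h]
  refine Finset.sum_congr rfl fun S _ => ?_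
  rw [Finset.prod_mul_distrib, Finset.prod_const, ← map_prod, Finset.prod_pow_eq_pow_sum]
  rfl

lemma prod_sign_even (n : ℕ) :
    ∏ i ∈ Icc 1 (2 * n), (C ((-1 : ℚ) ^ i) * X + 1) = (1 - X ^ 2) ^ n := by
  induction n with
  | zero => simp
  | succ n ih =>
    have h1 : 2 * (n + 1) = (2 * n + 1) + 1 := by ring
    rw [h1, Finset.prod_Icc_succ_top (by omega), Finset.prod_Icc_succ_top (by omega), ih]
    have e1 : ((-1 : ℚ)) ^ (2 * n + 1) = -1 := by
      rw [pow_succ, pow_mul]; simp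
    have e2 : ((-1 : ℚ)) ^ (2 * n + 1 + 1) = 1 := by
      rw [pow_succ, e1]; ring
    rw [e1, e2]
    simp only [map_neg, map_one]
    ring

lemma key (n : ℕ) :
    oPoly n = C (1 / 2 : ℚ) *
      ((1 + X) ^ n - ∏ i ∈ Icc 1 n, (C ((-1 : ℚ) ^ i) * X + 1)) := by
  rw [oPoly_eq_sum, ← sum_pow_card, ← sum_sign, ← Finset.sum_sub_distrib,
    Finset.mul_sum]
  refine Finset.sum_congr rfl fun S _ => ?_
  by_cases h : Odd (S.sum id)
  · rw [if_pos h, h.neg_one_pow, map_neg, map_one]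
    have h2 : (C (1/2 : ℚ)) * 2 = 1 := by
      rw [← map_ofNat (C : ℚ →+* ℚ[X]) 2, ← map_one (C : ℚ →+* ℚ[X]), ← map_mul]
      norm_num
    calc (X:ℚ[X]) ^ S.card = X ^ S.card * (C (1/2) * 2) := by rw [h2, mul_one]
    _ = C (1/2) * (X ^ S.card - -1 * X ^ S.card) := by ring
  · rw [if_neg h, (Nat.not_odd_iff_even.mp h).neg_one_pow, map_one]
    ring

open Polynomial in
theorem stmt_3 (n : ℕ) :
    oPoly (2 * n) = C (1 / 2 : ℚ) * ((1 + X) ^ (2 * n) - (1 - X ^ 2) ^ n) ∧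
    oPoly (2 * n + 1) =
      C (1 / 2 : ℚ) * ((1 + X) ^ (2 * n + 1) - (1 - X) * (1 - X ^ 2) ^ n) := by
  constructor
  · rw [key, prod_sign_even]
  · rw [key, Finset.prod_Icc_succ_top (by omega), prod_sign_even]
    have e1 : ((-1 : ℚ)) ^ (2 * n + 1) = -1 := by
      rw [pow_succ, pow_mul]; simp
    rw [e1]
    simp only [map_neg, map_one]
    ring
end

section
/- For all n and k, the Gaussian binomial coefficient is congruent to L(n,k) + (C(n,k) − L(n,k))·q modulo q^2 − 1, as polynomials in q with integer coefficients. -/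
def losanitsch : ℕ → ℕ → ℕ
  | 0, k => if k = 0 then 1 else 0
  | 1, k => if k ≤ 1 then 1 else 0
  | n + 2, k =>
      losanitsch n k + (if k = 0 then 0 else n.choose (k - 1)) +
        (if 2 ≤ k then losanitsch n (k - 2) else 0)

def inversions {n : ℕ} (w : Fin n → Bool) : ℕ :=
  (Finset.univ.filter
    (fun p : Fin n × Fin n => p.1 < p.2 ∧ w p.1 = true ∧ w p.2 = false)).card

def words (n k : ℕ) : Finset (Fin n → Bool) :=
  Finset.univ.filter (fun w => (Finset.univ.filter (fun i => w i = true)).card = k)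

noncomputable def gaussBinom (n k : ℕ) : Polynomial ℤ :=
  ∑ w ∈ words n k, Polynomial.X ^ inversions w

open Finset

def cnt {n : ℕ} (w : Fin n → Bool) : ℕ := (univ.filter (fun i => w i = true)).card

lemma cnt_snoc {n} (w : Fin n → Bool) (b : Bool) :
    cnt (Fin.snoc w b) = cnt w + (if b then 1 else 0) := by
  unfold cnt
  rw [card_filter, card_filter, Fin.sum_univ_castSucc]
  simp [Fin.snoc_castSucc, Fin.snoc_last]

lemma inversions_snoc {n} (w : Fin n → Bool) (b : Bool) :
    inversions (Fin.snoc w b) = inversions w + (if b then 0 else cnt w) := by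
  unfold inversions cnt
  rw [card_filter, card_filter, card_filter, Fintype.sum_prod_type, Fintype.sum_prod_type,
    Fin.sum_univ_castSucc]
  have h1 : ∀ i : Fin n, (∑ j : Fin (n+1),
      if i.castSucc < j ∧ (Fin.snoc w b : Fin (n+1) → Bool) i.castSucc = true ∧ (Fin.snoc w b : Fin (n+1) → Bool) j = false then 1 else 0)
     = (∑ j : Fin n, if i < j ∧ w i = true ∧ w j = false then 1 else 0)
       + (if w i = true ∧ b = false then 1 else 0) := by
    intro i
    rw [Fin.sum_univ_castSucc]
    congr 1
    · apply Finset.sum_congr rfl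
      intro j _
      simp [Fin.snoc_castSucc, Fin.castSucc_lt_castSucc_iff]
    · simp [Fin.snoc_castSucc, Fin.snoc_last, Fin.castSucc_lt_last]
  have h2 : (∑ j : Fin (n+1),
      if Fin.last n < j ∧ (Fin.snoc w b : Fin (n+1) → Bool) (Fin.last n) = true ∧ (Fin.snoc w b : Fin (n+1) → Bool) j = false then 1 else 0) = 0 := by
    apply Finset.sum_eq_zero
    intro j _
    simp only [ite_eq_right_iff]
    intro ⟨hj, _⟩
    exact absurd hj (not_lt.2 (Fin.le_last j))
  rw [h2, add_zero]
  rw [Finset.sum_congr rfl (fun i _ => h1 i), Finset.sum_add_distrib]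
  congr 1
  cases b <;> simp

def snocEquiv (n : ℕ) : (Fin n → Bool) × Bool ≃ (Fin (n+1) → Bool) where
  toFun p := Fin.snoc p.1 p.2
  invFun f := (fun i => f i.castSucc, f (Fin.last n))
  left_inv p := by simp [Fin.snoc_castSucc, Fin.snoc_last]
  right_inv := by
    intro f; funext i
    refine Fin.lastCases ?_ (fun j => ?_) i <;> simp [Fin.snoc_castSucc, Fin.snoc_last]

lemma sum_words_succ {M : Type} [AddCommMonoid M] {n : ℕ} (k : ℕ)
    (f : (Fin (n+1) → Bool) → M) :
    ∑ w ∈ words (n+1) k, f w =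
      (∑ w ∈ words n k, f (Fin.snoc w false)) +
      (if k = 0 then 0 else ∑ w ∈ words n (k-1), f (Fin.snoc w true)) := by
  have hw : ∀ m j, words m j = univ.filter (fun w => cnt w = j) := fun _ _ => rfl
  rw [hw, hw, Finset.sum_filter, Finset.sum_filter,
    ← Equiv.sum_comp (snocEquiv n), Fintype.sum_prod_type]
  simp only [snocEquiv, Equiv.coe_fn_mk, Fintype.sum_bool, cnt_snoc]
  simp only [if_true, Bool.false_eq_true, if_false, add_zero]
  rw [Finset.sum_add_distrib, add_comm]
  congr 1
  · rcases Nat.eq_zero_or_pos k with hk | hk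
    · subst hk; simp
    · rw [if_neg (by omega), hw, Finset.sum_filter]
      apply Finset.sum_congr rfl; intro w _
      have h : cnt w + 1 = k ↔ cnt w = k - 1 := by omega
      simp [h]

def S (n k : ℕ) : ℤ := ∑ w ∈ words n k, (-1 : ℤ) ^ inversions w

lemma cnt_of_mem {n k : ℕ} {w : Fin n → Bool} (h : w ∈ words n k) : cnt w = k := by
  have := Finset.mem_filter.mp h
  exact this.2

lemma S_succ (n k : ℕ) :
    S (n+1) k = (-1)^k * S n k + (if k = 0 then 0 else S n (k-1)) := by
  unfold S
  rw [sum_words_succ]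
  congr 1
  · rw [Finset.mul_sum]
    apply Finset.sum_congr rfl
    intro w hw
    rw [inversions_snoc]
    simp [cnt_of_mem hw, pow_add, mul_comm]
  · rcases Nat.eq_zero_or_pos k with hk | hk
    · simp [hk]
    · rw [if_neg (by omega), if_neg (by omega)]
      apply Finset.sum_congr rfl
      intro w hw
      rw [inversions_snoc]
      simp

lemma words_zero (k : ℕ) : words 0 k = if k = 0 then Finset.univ else ∅ := by
  have h : ∀ w : Fin 0 → Bool, cnt w = 0 := by
    intro w; simp [cnt]
  rcases Nat.eq_zero_or_pos k with hk | hk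
  · subst hk
    rw [if_pos rfl]
    apply Finset.filter_true_of_mem
    intro w _; exact h w
  · rw [if_neg (by omega)]
    apply Finset.filter_false_of_mem
    intro w _
    show ¬ _ = _
    rw [show (filter (fun i => w i = true) univ).card = cnt w from rfl, h w]; omega

lemma card_words : ∀ n k, (words n k).card = n.choose k := by
  intro n
  induction n with
  | zero =>
    intro k
    rw [words_zero]
    rcases Nat.eq_zero_or_pos k with hk | hk
    · subst hk; simp
    · rw [if_neg (by omega), Nat.choose_eq_zero_of_lt (by omega)]; simp
  | succ n ih =>
    intro k
    have : (words (n+1) k).card = ∑ w ∈ words (n+1) k, 1 := by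
      rw [Finset.card_eq_sum_ones]
    rw [this, sum_words_succ k (fun _ => 1)]
    rcases Nat.eq_zero_or_pos k with hk | hk
    · subst hk
      simp [← Finset.card_eq_sum_ones, ih]
    · obtain ⟨k', rfl⟩ := Nat.exists_eq_add_of_le hk
      rw [if_neg (by omega)]
      simp only [← Finset.card_eq_sum_ones, ih]
      rw [show Nat.succ 0 + k' = k' + 1 by omega, Nat.choose_succ_succ]
      simp only [Nat.succ_eq_add_one, Nat.add_sub_cancel]
      omega

lemma S_zero (k : ℕ) : S 0 k = if k = 0 then 1 else 0 := by
  unfold S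
  rw [words_zero]
  rcases Nat.eq_zero_or_pos k with hk | hk
  · subst hk
    rw [if_pos rfl, if_pos rfl]
    have : ∀ w : Fin 0 → Bool, inversions w = 0 := by
      intro w
      unfold inversions
      apply Finset.card_eq_zero.mpr
      apply Finset.filter_false_of_mem
      intro p _
      exact p.1.elim0
    simp [this]
  · rw [if_neg (by omega), if_neg (by omega)]; simp

lemma losanitsch_succ_succ (n k : ℕ) :
    losanitsch (n + 2) k = losanitsch n k + (if k = 0 then 0 else n.choose (k - 1)) +
        (if 2 ≤ k then losanitsch n (k - 2) else 0) := rfl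

lemma S_one (k : ℕ) : S 1 k = if k ≤ 1 then 1 else 0 := by
  rw [S_succ]
  match k with
  | 0 => simp [S_zero]
  | 1 => simp [S_zero]
  | k + 2 => simp [S_zero]

lemma S_eq : ∀ n k, S n k = 2 * (losanitsch n k : ℤ) - (n.choose k : ℤ) := by
  intro n
  induction n using Nat.strong_induction_on with
  | _ n ih =>
    match n with
    | 0 =>
      intro k
      rw [S_zero]
      unfold losanitsch
      rcases Nat.eq_zero_or_pos k with hk | hk
      · subst hk; simp
      · rw [if_neg (by omega), if_neg (by omega), Nat.choose_eq_zero_of_lt (by omega)]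
        simp
    | 1 =>
      intro k
      rw [S_one]
      unfold losanitsch
      match k with
      | 0 => simp
      | 1 => simp
      | k + 2 =>
        rw [if_neg (by omega), if_neg (by omega), Nat.choose_eq_zero_of_lt (by omega)]
        simp
    | m + 2 =>
      have ihm := ih m (by omega)
      intro k
      have key : S (m + 2) k = S m k + (if 2 ≤ k then S m (k - 2) else 0) := by
        rw [show m + 2 = (m + 1) + 1 from rfl, S_succ, S_succ]
        match k with
        | 0 => simp
        | 1 =>
          rw [S_succ]
          simp only [if_neg (by omega : ¬ (1:ℕ) = 0), if_pos rfl]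
          have h : (1:ℕ) - 1 = 0 := rfl
          rw [h, if_neg (by omega : ¬ (2:ℕ) ≤ 1)]
          simp
        | k + 2 =>
          rw [S_succ]
          simp only [if_neg (by omega : ¬ k + 2 = 0), if_neg (by omega : ¬ k + 1 = 0),
            if_pos (by omega : 2 ≤ k + 2), show k + 2 - 1 = k + 1 from rfl,
            show k + 1 - 1 = k from rfl, show k + 2 - 2 = k from rfl]
          have h1 : ((-1 : ℤ))^(k+2) = (-1)^k := by
            rw [pow_add]; norm_num
          have h2 : ((-1 : ℤ))^(k+1) = -(-1)^k := by
            rw [pow_add]; ring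
          rw [h1, h2]
          have h3 : ((-1:ℤ))^k * (-1)^k = 1 := by
            rw [← pow_add, ← two_mul, pow_mul]; norm_num
          have h3' : ((-1:ℤ))^(k*2) = 1 := by
            rw [show k*2 = 2*k from by ring, pow_mul]; norm_num
          ring_nf
          rw [h3']
          ring
      rw [key]
      rw [losanitsch_succ_succ]
      match k with
      | 0 =>
        simp only [if_pos rfl, if_neg (by omega : ¬ (2:ℕ) ≤ 0)]
        rw [ihm 0]
        simp
      | 1 =>
        rw [if_neg (by omega : ¬ (2:ℕ) ≤ 1), if_neg (by omega : ¬ (1:ℕ) = 0), ihm 1]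
        have hc : (m + 2).choose 1 = m.choose 1 + 2 * m.choose 0 := by
          rw [Nat.choose_succ_succ, Nat.choose_succ_succ]
          simp [Nat.choose_zero_right, Nat.choose_one_right]
          omega
        rw [hc]
        push_cast
        ring
      | k + 2 =>
        rw [if_pos (by omega : 2 ≤ k + 2), if_pos (by omega : 2 ≤ k + 2),
          if_neg (by omega : ¬ k + 2 = 0), show k + 2 - 1 = k + 1 from rfl,
          show k + 2 - 2 = k from rfl, ihm (k+2), ihm k]
        have hc : (m + 2).choose (k + 2) = m.choose (k+2) + 2 * m.choose (k+1) + m.choose k := by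
          rw [Nat.choose_succ_succ (m+1) (k+1), Nat.choose_succ_succ m k, Nat.choose_succ_succ m (k+1)]
          simp only [Nat.succ_eq_add_one]
          ring_nf
        rw [hc]
        push_cast
        ring

open Polynomial in
lemma dvd_of_two_roots {p : Polynomial ℤ} (h1 : p.eval 1 = 0) (h2 : p.eval (-1) = 0) :
    (X ^ 2 - 1 : Polynomial ℤ) ∣ p := by
  have f1 : (X - C (1:ℤ)) ∣ p := dvd_iff_isRoot.mpr h1
  obtain ⟨q, rfl⟩ := f1
  have hq : q.eval (-1) = 0 := by
    have h2' : ((X - C (1:ℤ)) * q).eval (-1) = 0 := h2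
    rw [eval_mul, eval_sub, eval_X, eval_C] at h2'
    linarith
  have f2 : (X - C (-1:ℤ)) ∣ q := dvd_iff_isRoot.mpr hq
  obtain ⟨r, rfl⟩ := f2
  exact ⟨r, by simp only [map_one, map_neg]; ring⟩

open Polynomial in
theorem stmt_14 (n k : ℕ) :
    (X ^ 2 - 1 : Polynomial ℤ) ∣
      (gaussBinom n k -
        (C (losanitsch n k : ℤ) + C ((n.choose k : ℤ) - (losanitsch n k : ℤ)) * X)) := by
  have e1 : (gaussBinom n k).eval 1 = (n.choose k : ℤ) := by
    unfold gaussBinom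
    rw [eval_finset_sum]
    have h : ∀ w ∈ words n k, eval 1 ((X : ℤ[X]) ^ inversions w) = 1 := by
      intro w _; simp
    rw [Finset.sum_congr rfl h, Finset.sum_const, card_words]
    simp
  have e2 : (gaussBinom n k).eval (-1) = S n k := by
    unfold S gaussBinom
    rw [eval_finset_sum]
    simp
  apply dvd_of_two_roots
  · rw [eval_sub, e1, eval_add, eval_mul, eval_C, eval_C, eval_X]
    ring
  · rw [eval_sub, e2, S_eq, eval_add, eval_mul, eval_C, eval_C, eval_X]
    ring
end

section
/- Define f_n(1) = Σ_{k=0}^{⌊(n−1)/2⌋} L(n−1−k, k). Then f_{2n}(1) = (F_{2n} + F_n)/2 and f_{2n+1}(1) = (F_{2n+1} + F_{n+2})/2, where F_m denotes the m-th Fibonacci number. -/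
def f (n : ℕ) : ℕ :=
  ∑ k ∈ Finset.range n, if 2 * k ≤ n - 1 then losanitsch (n - 1 - k) k else 0

lemma los_zero : ∀ n k, n < k → losanitsch n k = 0 := by
  intro n
  induction n using Nat.strong_induction_on with
  | _ n ih =>
    match n with
    | 0 => intro k h; simp [losanitsch]; omega
    | 1 => intro k h; simp [losanitsch]; omega
    | n + 2 =>
      intro k h
      rw [losanitsch]
      rw [ih n (by omega) k (by omega)]
      rw [Nat.choose_eq_zero_of_lt (by omega)]
      have h2 : (if 2 ≤ k then losanitsch n (k - 2) else 0) = 0 := by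
        split
        · exact ih n (by omega) (k - 2) (by omega)
        · rfl
      rw [h2]
      simp

lemma f_eq (n : ℕ) : f n = ∑ k ∈ Finset.range n, losanitsch (n - 1 - k) k := by
  unfold f
  apply Finset.sum_congr rfl
  intro k hk
  simp only [Finset.mem_range] at hk
  split
  · rfl
  · rw [los_zero]; omega

lemma fib_sum (n : ℕ) : ∑ j ∈ Finset.range (n + 1), Nat.choose (n - j) j = Nat.fib (n + 1) := by
  rw [Nat.fib_succ_eq_sum_choose, Finset.Nat.sum_antidiagonal_eq_sum_range_succ_mk]
  rw [← Finset.sum_range_reflect]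
  apply Finset.sum_congr rfl
  intro j hj
  simp only [Finset.mem_range] at hj
  congr 1
  omega

lemma f_rec (n : ℕ) : f (n + 4) = f (n + 2) + f n + Nat.fib (n + 1) := by
  rw [f_eq, f_eq, f_eq]
  rw [show Finset.range (n+4) = Finset.range ((n+2)+2) from by norm_num]
  rw [Finset.sum_range_succ, Finset.sum_range_succ]
  rw [show n + 4 - 1 - (n + 2) = 1 from by omega, show n + 4 - 1 - (n + 3) = 0 from by omega]
  rw [los_zero 1 (n+2) (by omega), los_zero 0 (n+3) (by omega)]
  have key : ∀ k ∈ Finset.range (n + 2), losanitsch (n + 4 - 1 - k) k =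
      losanitsch (n + 2 - 1 - k) k + (if k = 0 then 0 else Nat.choose (n + 1 - k) (k - 1)) +
        (if 2 ≤ k then losanitsch (n + 1 - k) (k - 2) else 0) := by
    intro k hk
    simp only [Finset.mem_range] at hk
    rw [show n + 4 - 1 - k = (n + 1 - k) + 2 from by omega, losanitsch]
    rw [show n + 2 - 1 - k = n + 1 - k from by omega]
  rw [Finset.sum_congr rfl key]
  rw [Finset.sum_add_distrib, Finset.sum_add_distrib]
  have h1 : ∑ k ∈ Finset.range (n + 2), (if k = 0 then 0 else Nat.choose (n + 1 - k) (k - 1))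
      = Nat.fib (n + 1) := by
    rw [Finset.sum_range_succ']
    have e : ∀ i ∈ Finset.range (n + 1),
        (if i + 1 = 0 then 0 else Nat.choose (n + 1 - (i + 1)) (i + 1 - 1)) =
          Nat.choose (n - i) i := by
      intro i hi
      rw [if_neg (by omega)]
      rw [show n + 1 - (i + 1) = n - i from by omega, show i + 1 - 1 = i from rfl]
    rw [Finset.sum_congr rfl e, fib_sum]
    simp
  have h2 : ∑ k ∈ Finset.range (n + 2), (if 2 ≤ k then losanitsch (n + 1 - k) (k - 2) else 0)
      = ∑ j ∈ Finset.range n, losanitsch (n - 1 - j) j := by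
    rw [Finset.sum_range_succ', Finset.sum_range_succ']
    have e : ∀ j ∈ Finset.range n,
        (if 2 ≤ j + 1 + 1 then losanitsch (n + 1 - (j + 1 + 1)) (j + 1 + 1 - 2) else 0) =
          losanitsch (n - 1 - j) j := by
      intro j hj
      simp only [Finset.mem_range] at hj
      rw [if_pos (by omega)]
      rw [show n + 1 - (j + 1 + 1) = n - 1 - j from by omega,
        show j + 1 + 1 - 2 = j from rfl]
    rw [Finset.sum_congr rfl e]
    norm_num
  rw [h1, h2]
  ring

lemma fib_step (a b c : ℕ) (hb : b = a + 1) (hc : c = a + 2) :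
    Nat.fib c = Nat.fib a + Nat.fib b := by
  subst hb; subst hc; exact Nat.fib_add_two

theorem stmt_19 (n : ℕ) :
    2 * f (2 * n) = Nat.fib (2 * n) + Nat.fib n ∧
    2 * f (2 * n + 1) = Nat.fib (2 * n + 1) + Nat.fib (n + 2) := by
  induction n using Nat.strong_induction_on with
  | _ n ih =>
    match n with
    | 0 => constructor <;> decide
    | 1 => constructor <;> decide
    | n + 2 =>
      obtain ⟨e1, o1⟩ := ih (n + 1) (by omega)
      obtain ⟨e0, o0⟩ := ih n (by omega)
      rw [show 2 * (n + 1) = 2 * n + 2 from by ring] at e1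
      rw [show 2 * (n + 1) + 1 = 2 * n + 3 from by ring, show n + 1 + 2 = n + 3 from rfl] at o1
      constructor
      · rw [show 2 * (n + 2) = 2 * n + 4 from by ring]
        have hr := f_rec (2 * n)
        rw [show 2 * n + 4 = 2 * n + 0 + 4 from by ring, show 2 * n + 0 + 4 = 2 * n + 4 from rfl,
          show 2 * n + 0 + 2 = 2 * n + 2 from rfl] at hr
        have f1 := fib_step (2*n+2) (2*n+3) (2*n+4) (by ring) (by ring)
        have f2 := fib_step (2*n+1) (2*n+2) (2*n+3) (by ring) (by ring)
        have f3 := fib_step (2*n) (2*n+1) (2*n+2) (by ring) (by ring)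
        have f4 := fib_step n (n+1) (n+2) (by ring) (by ring)
        omega
      · rw [show 2 * (n + 2) + 1 = 2 * n + 5 from by ring]
        have hr := f_rec (2 * n + 1)
        rw [show 2 * n + 1 + 4 = 2 * n + 5 from by ring, show 2 * n + 1 + 2 = 2 * n + 3 from by ring,
          show 2 * n + 1 + 1 = 2 * n + 2 from by ring] at hr
        have f1 := fib_step (2*n+3) (2*n+4) (2*n+5) (by ring) (by ring)
        have f2 := fib_step (2*n+2) (2*n+3) (2*n+4) (by ring) (by ring)
        have f3 := fib_step (2*n+1) (2*n+2) (2*n+3) (by ring) (by ring)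
        have f4 := fib_step (n+2) (n+3) (n+4) (by ring) (by ring)
        have f5 := fib_step (n+1) (n+2) (n+3) (by ring) (by ring)
        have f6 := fib_step n (n+1) (n+2) (by ring) (by ring)
        have f7 : Nat.fib (n+2+2) = Nat.fib (n+4) := by norm_num
        omega
end
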